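/- Let w = (w_0, …, w_n) be a tuple of coprime positive integers and let b_w(M) be the number of tuples (e_0, …, e_n) of nonnegative integers with Σ_i w_i e_i = M. If M is divisible by lcm(w_0,…,w_n), then b_w(M) = (1/∏_i w_i)·C(M+n, n) + c·C(M+n-1, n-1) + O_w(M^{n-2}) for some constant c depending only on w. -/

import Mathlib

open Polynomial Finset

private noncomputable def bb {m : ℕ} (w : Fin m → ℕ) (M : ℕ) : ℕ :=
  Nat.card {e : Fin m → ℕ // ∑ i, w i * e i = M}

private lemma bb_finite {m : ℕ} (w : Fin m → ℕ) (hw : ∀ i, 0 < w i) (M : ℕ) :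
    Finite {e : Fin m → ℕ // ∑ i, w i * e i = M} := by
  have key : ∀ (e : {e : Fin m → ℕ // ∑ i, w i * e i = M}) (i : Fin m), e.1 i < M + 1 := by
    rintro ⟨e, he⟩ i
    have h1 : w i * e i ≤ M := he ▸ Finset.single_le_sum (f := fun i => w i * e i)
      (fun _ _ => Nat.zero_le _) (Finset.mem_univ i)
    have h2 : e i ≤ w i * e i := Nat.le_mul_of_pos_left _ (hw i)
    simp only []
    omega
  apply Finite.of_injective (fun e => (fun i => (⟨e.1 i, key e i⟩ : Fin (M + 1))))
  intro a b h
  exact Subtype.ext (funext fun i => congrArg Fin.val (congrFun h i))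

private lemma bb_one (w : Fin 1 → ℕ) (M : ℕ) (hw : 0 < w 0) :
    bb w M = if w 0 ∣ M then 1 else 0 := by
  have hsum : ∀ e : Fin 1 → ℕ, (∑ i, w i * e i) = w 0 * e 0 := fun e => by
    simp [Fin.sum_univ_one]
  split_ifs with h
  · obtain ⟨x, rfl⟩ := h
    have : Unique {e : Fin 1 → ℕ // ∑ i, w i * e i = w 0 * x} := by
      refine ⟨⟨⟨fun _ => x, by simp [hsum]⟩⟩, ?_⟩
      rintro ⟨e, he⟩
      rw [hsum] at he
      have he0 : e 0 = x := Nat.eq_of_mul_eq_mul_left hw he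
      ext i
      have : i = 0 := by omega
      simp [this, he0]
    exact Nat.card_unique
  · have : IsEmpty {e : Fin 1 → ℕ // ∑ i, w i * e i = M} := by
      refine ⟨?_⟩
      rintro ⟨e, he⟩
      exact h ⟨e 0, (hsum e ▸ he).symm⟩
    exact Nat.card_of_isEmpty

private def fwd {k : ℕ} (w : Fin (k + 2) → ℕ) (M : ℕ)
    (e : {e : Fin (k + 2) → ℕ // ∑ i, w i * e i = M + w 0}) :
    {e : Fin (k + 1) → ℕ // ∑ i, (w ∘ Fin.succ) i * e i = M + w 0} ⊕
      {e : Fin (k + 2) → ℕ // ∑ i, w i * e i = M} :=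
  if h : e.1 0 = 0 then Sum.inl ⟨fun i => e.1 i.succ, by
    have h2 := e.2; rw [Fin.sum_univ_succ] at h2; simpa [h, Function.comp] using h2⟩
  else Sum.inr ⟨Fin.cons (e.1 0 - 1) (fun i => e.1 i.succ), by
    have h2 := e.2; rw [Fin.sum_univ_succ] at h2
    rw [Fin.sum_univ_succ]
    simp only [Fin.cons_zero, Fin.cons_succ]
    have h0 : 1 ≤ e.1 0 := Nat.one_le_iff_ne_zero.mpr h
    have h3 : w 0 * (e.1 0 - 1) = w 0 * e.1 0 - w 0 := by rw [Nat.mul_sub, mul_one]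
    have hge : w 0 ≤ w 0 * e.1 0 := le_mul_of_one_le_right (Nat.zero_le _) h0
    omega⟩

private def bwd {k : ℕ} (w : Fin (k + 2) → ℕ) (M : ℕ)
    (x : {e : Fin (k + 1) → ℕ // ∑ i, (w ∘ Fin.succ) i * e i = M + w 0} ⊕
      {e : Fin (k + 2) → ℕ // ∑ i, w i * e i = M}) :
    {e : Fin (k + 2) → ℕ // ∑ i, w i * e i = M + w 0} :=
  Sum.casesOn x
    (fun e => ⟨Fin.cons 0 e.1, by
      have h2 := e.2; rw [Fin.sum_univ_succ]
      simp only [Fin.cons_zero, Fin.cons_succ, mul_zero, zero_add]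
      simpa [Function.comp] using h2⟩)
    (fun e => ⟨Fin.cons (e.1 0 + 1) (fun i => e.1 i.succ), by
      have h2 := e.2; rw [Fin.sum_univ_succ] at h2; rw [Fin.sum_univ_succ]
      simp only [Fin.cons_zero, Fin.cons_succ]
      have h3 : w 0 * (e.1 0 + 1) = w 0 * e.1 0 + w 0 := by ring
      omega⟩)

private lemma bb_rec {k : ℕ} (w : Fin (k + 2) → ℕ) (hw : ∀ i, 0 < w i) (M : ℕ) :
    bb w (M + w 0) = bb (w ∘ Fin.succ) (M + w 0) + bb w M := by
  classical
  haveI := bb_finite w hw (M + w 0)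
  haveI := bb_finite (w ∘ Fin.succ) (fun i => hw _) (M + w 0)
  haveI := bb_finite w hw M
  rw [bb, bb, bb, ← Nat.card_sum]
  apply Nat.card_congr
  refine ⟨fwd w M, bwd w M, ?_, ?_⟩
  · rintro ⟨e, he⟩
    by_cases h : e 0 = 0
    · rw [fwd]
      simp only [h, dif_pos]
      rw [bwd]
      apply Subtype.ext
      simp only
      ext i
      refine Fin.cases ?_ (fun j => ?_) i
      · simp [h]
      · simp
    · rw [fwd]
      simp only [h, dif_neg, not_false_iff]
      rw [bwd]
      apply Subtype.ext
      simp only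
      ext i
      refine Fin.cases ?_ (fun j => ?_) i
      · simp only [Fin.cons_zero]; omega
      · simp [Fin.cons_succ]
  · rintro (⟨e, he⟩ | ⟨e, he⟩)
    · rw [bwd, fwd]
      simp only [Fin.cons_zero, dif_pos]
      apply congrArg
      apply Subtype.ext
      simp only
      ext i
      simp [Fin.cons_succ]
    · have hne : (Fin.cons (e 0 + 1) (fun i => e i.succ) : Fin (k+2) → ℕ) 0 ≠ 0 := by
        simp [Fin.cons_zero]
      rw [bwd, fwd]
      simp only [Fin.cons_zero, Nat.succ_ne_zero, dif_neg, not_false_iff]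
      apply congrArg
      apply Subtype.ext
      simp only
      ext i
      refine Fin.cases ?_ (fun j => ?_) i
      · simp [Fin.cons_zero]
      · simp [Fin.cons_succ]

private lemma bb_iter {k : ℕ} (w : Fin (k + 2) → ℕ) (hw : ∀ i, 0 < w i) (M T : ℕ) :
    bb w (M + w 0 * T) = bb w M + ∑ u ∈ range T, bb (w ∘ Fin.succ) (M + w 0 * (u + 1)) := by
  induction T with
  | zero => simp
  | succ T ih =>
    have h : M + w 0 * (T + 1) = (M + w 0 * T) + w 0 := by ring
    rw [h, bb_rec w hw, ih, Finset.sum_range_succ, ← h]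
    ring

private lemma sum_pow_poly (d : ℕ) : ∃ F : Polynomial ℝ, F.natDegree ≤ d + 1 ∧
    F.coeff (d + 1) = 1 / (d + 1) ∧ ∀ N : ℕ, ∑ s ∈ range N, (s : ℝ) ^ d = F.eval (N : ℝ) := by
  refine ⟨∑ i ∈ range (d + 1),
    C (((_root_.bernoulli i * ((d + 1).choose i) / (d + 1) : ℚ) : ℝ)) * X ^ (d + 1 - i), ?_, ?_, ?_⟩
  · apply Polynomial.natDegree_sum_le_of_forall_le
    intro i hi
    apply le_trans (Polynomial.natDegree_mul_le)
    simp only [Polynomial.natDegree_C, Polynomial.natDegree_X_pow, zero_add]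
    omega
  · rw [Polynomial.finset_sum_coeff]
    rw [Finset.sum_eq_single 0]
    · simp only [Polynomial.coeff_C_mul, Polynomial.coeff_X_pow, if_pos (by omega : d + 1 - 0 = d + 1)]
      norm_num
    · intro i hi hne
      simp only [Polynomial.coeff_C_mul, Polynomial.coeff_X_pow]
      rw [if_neg, mul_zero]
      simp only [Finset.mem_range] at hi
      omega
    · intro h
      simp at h
  · intro N
    have := sum_range_pow N d
    have hcast : ((∑ s ∈ range N, (s : ℚ) ^ d : ℚ) : ℝ) = ∑ s ∈ range N, (s : ℝ) ^ d := by
      push_cast; ring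
    rw [← hcast, this]
    push_cast
    rw [Polynomial.eval_finset_sum]
    apply Finset.sum_congr rfl
    intro i hi
    simp only [Polynomial.eval_mul, Polynomial.eval_pow, Polynomial.eval_C, Polynomial.eval_X]
    push_cast
    ring

private lemma sum_poly (d : ℕ) (Q : Polynomial ℝ) (hQ : Q.natDegree ≤ d) :
    ∃ F : Polynomial ℝ, F.natDegree ≤ d + 1 ∧ F.coeff (d + 1) = Q.coeff d / (d + 1) ∧
      ∀ N : ℕ, ∑ s ∈ range N, Q.eval (s : ℝ) = F.eval (N : ℝ) := by
  choose F hdeg hcoeff heval using sum_pow_poly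
  refine ⟨∑ j ∈ range (d + 1), C (Q.coeff j) * F j, ?_, ?_, ?_⟩
  · apply Polynomial.natDegree_sum_le_of_forall_le
    intro j hj
    apply le_trans (Polynomial.natDegree_mul_le)
    simp only [Polynomial.natDegree_C, zero_add]
    simp only [Finset.mem_range] at hj
    exact le_trans (hdeg j) (by omega)
  · rw [Polynomial.finset_sum_coeff]
    rw [Finset.sum_eq_single d]
    · rw [Polynomial.coeff_C_mul, hcoeff d]
      ring
    · intro j hj hne
      rw [Polynomial.coeff_C_mul]
      have : (F j).coeff (d + 1) = 0 := by
        apply Polynomial.coeff_eq_zero_of_natDegree_lt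
        apply lt_of_le_of_lt (hdeg j)
        simp only [Finset.mem_range] at hj
        omega
      rw [this, mul_zero]
    · intro h
      simp at h
  · intro N
    have : ∀ s : ℕ, Q.eval (s : ℝ) = ∑ j ∈ range (d + 1), Q.coeff j * (s : ℝ) ^ j := fun s =>
      Polynomial.eval_eq_sum_range' (by omega) _
    simp_rw [this]
    rw [Finset.sum_comm]
    rw [Polynomial.eval_finset_sum]
    apply Finset.sum_congr rfl
    intro j hj
    rw [← Finset.mul_sum, heval j, Polynomial.eval_mul, Polynomial.eval_C]

private lemma poly_of_delta (d : ℕ) (f : ℕ → ℝ) (Q : Polynomial ℝ) (hQ : Q.natDegree ≤ d)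
    (h : ∀ t : ℕ, 1 ≤ t → f (t + 1) = f t + Q.eval (t : ℝ)) :
    ∃ G : Polynomial ℝ, G.natDegree ≤ d + 1 ∧ G.coeff (d + 1) = Q.coeff d / (d + 1) ∧
      ∀ t : ℕ, 1 ≤ t → f t = G.eval (t : ℝ) := by
  obtain ⟨F, hdeg, hcoeff, heval⟩ := sum_poly d Q hQ
  refine ⟨F + C (f 1 - F.eval 1), ?_, ?_, ?_⟩
  · apply le_trans (Polynomial.natDegree_add_le _ _)
    simp [hdeg]
  · rw [Polynomial.coeff_add, Polynomial.coeff_C, if_neg (by omega), add_zero, hcoeff]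
  · intro t ht
    induction t with
    | zero => omega
    | succ t ih =>
      rcases Nat.lt_or_ge t 1 with h1 | h1
      · interval_cases t
        simp
      · rw [h t h1, ih h1]
        have : F.eval ((t : ℝ) + 1) = F.eval (t : ℝ) + Q.eval (t : ℝ) := by
          have e1 := heval (t + 1)
          have e2 := heval t
          rw [Finset.sum_range_succ] at e1
          push_cast at e1
          rw [e2] at e1
          linarith
        simp only [Polynomial.eval_add, Polynomial.eval_C]
        push_cast
        rw [this]
        ring

private lemma comp_shift (P : Polynomial ℝ) (c : ℝ) (k : ℕ) (hP : P.natDegree ≤ k) :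
    (P.comp (X + C c)).natDegree ≤ k ∧ (P.comp (X + C c)).coeff k = P.coeff k := by
  have hq : (X + C c : Polynomial ℝ).natDegree = 1 := Polynomial.natDegree_X_add_C c
  have hdeg : (P.comp (X + C c)).natDegree = P.natDegree := by
    rw [Polynomial.natDegree_comp, hq, mul_one]
  refine ⟨by rw [hdeg]; exact hP, ?_⟩
  rcases lt_or_eq_of_le hP with hlt | heq
  · have l1 : (P.comp (X + C c)).natDegree < k := by rw [hdeg]; exact hlt
    rw [Polynomial.coeff_eq_zero_of_natDegree_lt l1,
      Polynomial.coeff_eq_zero_of_natDegree_lt hlt]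
  · have h1 : (P.comp (X + C c)).coeff k = (P.comp (X + C c)).leadingCoeff := by
      rw [Polynomial.leadingCoeff, hdeg, heq]
    rw [h1, Polynomial.leadingCoeff_comp (by rw [hq]; omega)]
    have h2 : (X + C c : Polynomial ℝ).leadingCoeff = 1 := by
      rw [Polynomial.leadingCoeff, hq]
      simp
    rw [h2, one_pow, mul_one, Polynomial.leadingCoeff, heq]

private lemma prod_linear (a : ℝ) (b : ℕ → ℝ) (s : ℕ) :
    (∏ j ∈ range s, (C a * X + C (b j))).natDegree ≤ s ∧
      (∏ j ∈ range s, (C a * X + C (b j))).coeff s = a ^ s := by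
  induction s with
  | zero => simp
  | succ s ih =>
    obtain ⟨hdeg, hcoeff⟩ := ih
    rw [Finset.prod_range_succ]
    constructor
    · apply le_trans (Polynomial.natDegree_mul_le)
      have : (C a * X + C (b s) : Polynomial ℝ).natDegree ≤ 1 := by
        apply le_trans (Polynomial.natDegree_add_le _ _)
        simp [Polynomial.natDegree_C]
        exact le_trans (Polynomial.natDegree_mul_le) (by simp)
      omega
    · rw [mul_add, Polynomial.coeff_add]
      have h1 : ((∏ j ∈ range s, (C a * X + C (b j))) * (C a * X)).coeff (s + 1) = a ^ (s + 1) := by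
        rw [show (∏ j ∈ range s, (C a * X + C (b j))) * (C a * X)
            = C a * ((∏ j ∈ range s, (C a * X + C (b j))) * X) by ring,
          Polynomial.coeff_C_mul, Polynomial.coeff_mul_X, hcoeff]
        ring
      rw [h1]
      have h2 : ((∏ j ∈ range s, (C a * X + C (b j))) * C (b s)).coeff (s + 1) = 0 := by
        rw [mul_comm, Polynomial.coeff_C_mul]
        rw [Polynomial.coeff_eq_zero_of_natDegree_lt (by omega), mul_zero]
      rw [h2, add_zero]

private lemma eval_bound (P : Polynomial ℝ) (d : ℕ) (hP : ∀ j, d < j → P.coeff j = 0)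
    (x : ℝ) (hx : 1 ≤ x) :
    |P.eval x| ≤ (∑ j ∈ range (d + 1), |P.coeff j|) * x ^ d := by
  have hdeg : P.natDegree < d + 1 := by
    by_contra hcon
    push_neg at hcon
    have : P.coeff P.natDegree = 0 := hP _ (by omega)
    have hne : P ≠ 0 := by
      intro h0
      rw [h0] at hcon
      simp at hcon
    exact (Polynomial.leadingCoeff_ne_zero.mpr hne) this
  rw [Polynomial.eval_eq_sum_range' hdeg]
  apply le_trans (Finset.abs_sum_le_sum_abs _ _)
  rw [Finset.sum_mul]
  apply Finset.sum_le_sum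
  intro j hj
  rw [abs_mul]
  apply mul_le_mul_of_nonneg_left _ (abs_nonneg _)
  rw [abs_pow, abs_of_nonneg (by linarith)]
  exact pow_le_pow_right₀ hx (by simp only [Finset.mem_range] at hj; omega)

private lemma choose_prod_nat (m s : ℕ) :
    (m + s).choose s * s.factorial * m.factorial = (∏ j ∈ range s, (m + j + 1)) * m.factorial := by
  have h1 : (∏ j ∈ range s, (m + j + 1)) * m.factorial = (m + s).factorial := by
    induction s with
    | zero => simp
    | succ s ih =>
      rw [Finset.prod_range_succ]
      have : (∏ j ∈ range s, (m + j + 1)) * (m + s + 1) * m.factorial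
          = ((∏ j ∈ range s, (m + j + 1)) * m.factorial) * (m + s + 1) := by ring
      rw [this, ih]
      rw [show m + (s + 1) = (m + s) + 1 by ring, Nat.factorial_succ]
      ring
  rw [h1]
  have := Nat.choose_mul_factorial_mul_factorial (Nat.le_add_left s m)
  rw [show m + s - s = m by omega] at this
  exact this

private lemma choose_cast (m s : ℕ) :
    ((m + s).choose s : ℝ) = (∏ j ∈ range s, ((m : ℝ) + j + 1)) / s.factorial := by
  have h := choose_prod_nat m s
  have hs : (s.factorial : ℝ) ≠ 0 := Nat.cast_ne_zero.mpr (Nat.factorial_ne_zero s)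
  have hm : m.factorial ≠ 0 := Nat.factorial_ne_zero m
  have h2 : (m + s).choose s * s.factorial = ∏ j ∈ range s, (m + j + 1) :=
    Nat.eq_of_mul_eq_mul_right (Nat.pos_of_ne_zero hm) h
  have h3 : ((m + s).choose s : ℝ) * s.factorial = ∏ j ∈ range s, ((m : ℝ) + j + 1) := by
    have := congrArg (fun x : ℕ => (x : ℝ)) h2
    push_cast at this
    convert this using 2
  field_simp
  linarith [h3]

private lemma periodic_count (P : ℕ → Prop) [DecidablePred P] (p : ℕ)
    (hper : ∀ u, P (u + p) ↔ P u) (m : ℕ) :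
    ((range (p * m)).filter P).card = m * ((range p).filter P).card := by
  have hshift : ∀ m u, P (u + p * m) ↔ P u := by
    intro m
    induction m with
    | zero => simp
    | succ m ih =>
      intro u
      rw [show u + p * (m + 1) = (u + p * m) + p by ring, hper, ih]
  induction m with
  | zero => simp
  | succ m ih =>
    have hdis : Disjoint ((range (p * m)).filter P)
        (((range p).map (addLeftEmbedding (p * m))).filter P) := by
      apply Finset.disjoint_filter_filter
      rw [Finset.disjoint_left]
      intro x hx hx2
      simp only [Finset.mem_range] at hx
      simp only [Finset.mem_map, Finset.mem_range, addLeftEmbedding_apply] at hx2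
      obtain ⟨y, _, hy⟩ := hx2
      omega
    rw [show p * (m + 1) = p * m + p by ring, Finset.range_add_eq_union,
      Finset.filter_union, Finset.card_union_of_disjoint hdis, ih, Finset.filter_map,
      Finset.card_map]
    have hcomp : ((range p).filter (P ∘ ⇑(addLeftEmbedding (p * m)))) = (range p).filter P := by
      apply Finset.filter_congr
      intro u _
      simp only [Function.comp_apply, addLeftEmbedding_apply]
      rw [show p * m + u = u + p * m by ring]
      simp [hshift m u]
    rw [hcomp]
    ring

private lemma window_count (a b r : ℕ) (ha : 0 < a) (hcop : Nat.Coprime b a) :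
    ((range a).filter (fun u => a ∣ (r + b * (u + 1)))).card = 1 := by
  haveI : NeZero a := ⟨ha.ne'⟩
  have hunit : IsUnit ((b : ℕ) : ZMod a) := (ZMod.isUnit_iff_coprime b a).mpr hcop
  obtain ⟨v, hv⟩ := hunit.exists_right_inv
  set z : ZMod a := v * (-(r : ZMod a)) - 1 with hz
  have key : ∀ u : ℕ, (a ∣ (r + b * (u + 1))) ↔ ((u : ZMod a) = z) := by
    intro u
    rw [← ZMod.natCast_eq_zero_iff]
    push_cast
    constructor
    · intro h
      have h2 : (v * (b : ZMod a)) * ((u : ZMod a) + 1) = v * (-(r : ZMod a)) := by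
        rw [mul_assoc]
        rw [show ((b:ZMod a)) * ((u : ZMod a) + 1) = -(r:ZMod a) by linear_combination h]
      rw [mul_comm v (b : ZMod a), hv, one_mul] at h2
      rw [hz, ← h2]
      ring
    · intro h
      rw [h, hz]
      have : (b : ZMod a) * (v * (-(r : ZMod a)) - 1 + 1) = (b : ZMod a) * v * (-(r:ZMod a)) := by
        ring
      rw [this, hv, one_mul]
      ring
  rw [Finset.card_eq_one]
  refine ⟨z.val, ?_⟩
  ext u
  simp only [Finset.mem_filter, Finset.mem_range, Finset.mem_singleton, key u]
  constructor
  · rintro ⟨hu, hu2⟩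
    rw [← hu2, ZMod.val_cast_of_lt hu]
  · rintro rfl
    exact ⟨ZMod.val_lt z, ZMod.natCast_zmod_val z⟩

private lemma count_cong (g' w0 L T r : ℕ) (hg' : 0 < g') (hw0 : 0 < w0)
    (hL : w0 * T = L) (hg'L : g' ∣ L) :
    (g' / Nat.gcd g' w0) ∣ T ∧
    (((range T).filter (fun u => g' ∣ (r + w0 * (u + 1)))).card
      = if Nat.gcd g' w0 ∣ r then T / (g' / Nat.gcd g' w0) else 0) := by
  set g := Nat.gcd g' w0 with hgdef
  have hg : 0 < g := Nat.gcd_pos_of_pos_left _ hg'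
  obtain ⟨a, ha⟩ : g ∣ g' := Nat.gcd_dvd_left _ _
  obtain ⟨b, hb⟩ : g ∣ w0 := Nat.gcd_dvd_right _ _
  have hpa : g' / g = a := by rw [ha, Nat.mul_div_cancel_left _ hg]
  have hpb : w0 / g = b := by rw [hb, Nat.mul_div_cancel_left _ hg]
  have hcop : Nat.Coprime b a := by
    have hc := Nat.coprime_div_gcd_div_gcd hg
    rw [← hgdef, hpa, hpb] at hc
    exact Nat.coprime_comm.mp hc
  have ha0 : 0 < a := by
    rcases Nat.eq_zero_or_pos a with h | h
    · subst h; simp at ha; omega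
    · exact h
  -- p ∣ T
  have hdvdT : a ∣ T := by
    have hlcm : Nat.lcm g' w0 ∣ L := Nat.lcm_dvd hg'L ⟨T, hL.symm⟩
    have hgl : g * Nat.lcm g' w0 = g' * w0 := Nat.gcd_mul_lcm g' w0
    have hlcm_eq : Nat.lcm g' w0 = a * w0 := by
      have : g * Nat.lcm g' w0 = g * (a * w0) := by
        rw [hgl, ha]; ring
      exact Nat.eq_of_mul_eq_mul_left hg this
    rw [hlcm_eq, ← hL] at hlcm
    obtain ⟨u, hu⟩ := hlcm
    refine ⟨u, ?_⟩
    have : w0 * T = w0 * (a * u) := by rw [hu]; ring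
    exact Nat.eq_of_mul_eq_mul_left hw0 this
  refine ⟨hpa ▸ hdvdT, ?_⟩
  obtain ⟨m, hm⟩ := hdvdT
  split_ifs with hr
  · obtain ⟨c, hc⟩ := hr
    have hcond : ∀ u, (g' ∣ (r + w0 * (u + 1))) ↔ (a ∣ (c + b * (u + 1))) := by
      intro u
      rw [ha, hc, hb]
      constructor
      · intro h
        have : g * a ∣ g * (c + b * (u+1)) := by
          convert h using 1
          ring
        exact (Nat.mul_dvd_mul_iff_left hg).mp this
      · intro h
        have : g * a ∣ g * (c + b * (u+1)) := (Nat.mul_dvd_mul_iff_left hg).mpr h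
        convert this using 1
        ring
    have haux : ∀ x : ℕ, a ∣ x + b * a ↔ a ∣ x := by
      intro x
      constructor
      · intro h
        have h2 := Nat.dvd_sub h (⟨b, mul_comm b a⟩ : a ∣ b * a)
        rwa [show x + b * a - b * a = x by omega] at h2
      · intro h
        exact dvd_add h ⟨b, mul_comm b a⟩
    have hper : ∀ u, (g' ∣ (r + w0 * (u + a + 1))) ↔ (g' ∣ (r + w0 * (u + 1))) := by
      intro u
      rw [hcond, hcond, show c + b * (u + a + 1) = (c + b * (u + 1)) + b * a by ring, haux]
    have hpc := periodic_count (fun u => g' ∣ (r + w0 * (u + 1))) a hper m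
    rw [hm, hpc]
    have hw : ((range a).filter (fun u => g' ∣ (r + w0 * (u + 1)))).card = 1 := by
      have heq : ((range a).filter (fun u => g' ∣ (r + w0 * (u + 1))))
          = ((range a).filter (fun u => a ∣ (c + b * (u + 1)))) := by
        apply Finset.filter_congr
        intro u _
        simp [hcond u]
      rw [heq, window_count a b c ha0 hcop]
    rw [hw, hpa, Nat.mul_div_cancel_left _ ha0]
    ring
  · rw [Finset.card_eq_zero, Finset.filter_eq_empty_iff]
    intro u _
    intro hdvd
    apply hr
    have h1 : g ∣ r + w0 * (u + 1) := dvd_trans ⟨a, ha⟩ hdvd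
    have h2 : g ∣ w0 * (u + 1) := Dvd.dvd.mul_right ⟨b, hb⟩ _
    have h3 := Nat.dvd_sub h1 h2
    rwa [show r + w0 * (u + 1) - w0 * (u + 1) = r by omega] at h3
private lemma gcd_univ_head {k : ℕ} (w : Fin (k + 2) → ℕ) :
    Finset.univ.gcd w = Nat.gcd (w 0) (Finset.univ.gcd (w ∘ Fin.succ)) := by
  apply Nat.dvd_antisymm
  · apply Nat.dvd_gcd
    · exact Finset.gcd_dvd (Finset.mem_univ 0)
    · apply Finset.dvd_gcd
      intro i _
      exact Finset.gcd_dvd (Finset.mem_univ _)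
  · apply Finset.dvd_gcd
    intro i _
    refine Fin.cases ?_ (fun j => ?_) i
    · exact Nat.gcd_dvd_left _ _
    · exact dvd_trans (Nat.gcd_dvd_right _ _) (Finset.gcd_dvd (Finset.mem_univ j))

private lemma dvd_mod_iff' (a b n : ℕ) (h : a ∣ n) : a ∣ b % n ↔ a ∣ b := by
  have hmod := Nat.div_add_mod b n
  have h1 : a ∣ n * (b / n) := Dvd.dvd.mul_right h _
  constructor
  · intro h2
    have := dvd_add h1 h2
    rwa [hmod] at this
  · intro h2
    have h3 := Nat.dvd_sub h2 h1
    rwa [show b - n * (b / n) = b % n by omega] at h3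

private lemma dvd_add_mul_iff (a b c : ℕ) (h : a ∣ c) : a ∣ b + c ↔ a ∣ b := by
  constructor
  · intro h2
    have h3 := Nat.dvd_sub h2 h
    rwa [show b + c - c = b by omega] at h3
  · intro h2
    exact dvd_add h2 h

private lemma key : ∀ (k : ℕ) (w : Fin (k + 1) → ℕ), (∀ i, 0 < w i) →
    ∀ (L : ℕ), 0 < L → (∀ i, w i ∣ L) → ∀ (r : ℕ),
    ∃ G : Polynomial ℝ, G.natDegree ≤ k ∧
      G.coeff k = (if Finset.univ.gcd w ∣ r
        then (L : ℝ) ^ k * ((Finset.univ.gcd w : ℕ) : ℝ)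
          / ((k.factorial : ℝ) * ∏ i, (w i : ℝ))
        else 0) ∧
      ∀ t : ℕ, 1 ≤ t → (bb w (L * t + r) : ℝ) = G.eval (t : ℝ) := by
  intro k
  induction k with
  | zero =>
    intro w hw L hL hdvd r
    have hg : Finset.univ.gcd w = w 0 := by simp
    refine ⟨C (if w 0 ∣ r then 1 else 0), ?_, ?_, ?_⟩
    · split_ifs <;> simp
    · rw [Polynomial.coeff_C, if_pos rfl, hg]
      have hprod : (∏ i, (w i : ℝ)) = (w 0 : ℝ) := by
        rw [Fin.prod_univ_one]
      rw [hprod]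
      have hw0 : ((w 0 : ℕ) : ℝ) ≠ 0 := Nat.cast_ne_zero.mpr (hw 0).ne'
      split_ifs with h
      · rw [pow_zero, Nat.factorial_zero]
        field_simp
        norm_num
      · rfl
    · intro t ht
      have hiff : (w 0 ∣ L * t + r) ↔ (w 0 ∣ r) := by
        have h := dvd_add_mul_iff (w 0) r (L * t) (Dvd.dvd.mul_right (hdvd 0) t)
        rwa [Nat.add_comm r (L * t)] at h
      rw [bb_one w _ (hw 0), Polynomial.eval_C]
      split_ifs with h1 h2 h2
      · simp
      · exact absurd (hiff.mp h1) h2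
      · exact absurd (hiff.mpr h2) h1
      · simp
  | succ k ih =>
    intro w hw L hL hdvd r
    set w' : Fin (k + 1) → ℕ := w ∘ Fin.succ with hw'def
    have hw' : ∀ i, 0 < w' i := fun i => hw _
    obtain ⟨T, hT⟩ : w 0 ∣ L := hdvd 0
    set g' := Finset.univ.gcd w' with hg'def
    have hg'pos : 0 < g' := by
      rcases Nat.eq_zero_or_pos g' with h | h
      · exfalso
        rw [hg'def, Finset.gcd_eq_zero_iff] at h
        exact (hw' 0).ne' (h 0 (Finset.mem_univ 0))
      · exact h
    have hg'L : g' ∣ L := dvd_trans (Finset.gcd_dvd (Finset.mem_univ 0)) (hdvd _)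
    choose Gf hGdeg hGcoeff hGeval using ih w' hw' L hL (fun i => hdvd _)
    set Q : Polynomial ℝ := ∑ u ∈ range T,
      (Gf ((r + w 0 * (u + 1)) % L)).comp (X + C (((r + w 0 * (u + 1)) / L : ℕ) : ℝ)) with hQdef
    have hQdeg : Q.natDegree ≤ k := by
      apply Polynomial.natDegree_sum_le_of_forall_le
      intro u _
      exact (comp_shift (Gf _) _ k (hGdeg _)).1
    have hdelta : ∀ t : ℕ, 1 ≤ t →
        ((bb w (L * (t + 1) + r) : ℝ)) = (bb w (L * t + r) : ℝ) + Q.eval (t : ℝ) := by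
      intro t ht
      have harg : L * (t + 1) + r = (L * t + r) + w 0 * T := by
        rw [hT]; ring
      rw [harg, bb_iter w hw (L * t + r) T]
      push_cast
      congr 1
      rw [hQdef, Polynomial.eval_finset_sum]
      apply Finset.sum_congr rfl
      intro u _
      have hmod := Nat.div_add_mod (r + w 0 * (u + 1)) L
      have hdist : L * (t + (r + w 0 * (u + 1)) / L) = L * t + L * ((r + w 0 * (u + 1)) / L) :=
        Nat.mul_add L t _
      have harg2 : L * t + r + w 0 * (u + 1)
          = L * (t + (r + w 0 * (u + 1)) / L) + (r + w 0 * (u + 1)) % L := by omega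
      have he := hGeval ((r + w 0 * (u + 1)) % L) (t + (r + w 0 * (u + 1)) / L) (le_trans ht (Nat.le_add_right t _))
      rw [harg2, he]
      rw [Polynomial.eval_comp, Polynomial.eval_add, Polynomial.eval_X, Polynomial.eval_C]
      push_cast
      ring
    obtain ⟨G, hGdeg2, hGcoeff2, hGeval2⟩ :=
      poly_of_delta k (fun t => (bb w (L * t + r) : ℝ)) Q hQdeg hdelta
    refine ⟨G, hGdeg2, ?_, hGeval2⟩
    rw [hGcoeff2]
    -- compute Q.coeff k
    set A : ℝ := (L : ℝ) ^ k * (g' : ℝ) / ((k.factorial : ℝ) * ∏ i, (w' i : ℝ)) with hAdef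
    have hQcoeff : Q.coeff k = ((range T).filter (fun u => g' ∣ (r + w 0 * (u + 1)))).card * A := by
      rw [hQdef, Polynomial.finset_sum_coeff]
      have hterm : ∀ u ∈ range T,
          ((Gf ((r + w 0 * (u + 1)) % L)).comp
            (X + C (((r + w 0 * (u + 1)) / L : ℕ) : ℝ))).coeff k
          = if g' ∣ (r + w 0 * (u + 1)) then A else 0 := by
        intro u _
        rw [(comp_shift (Gf _) _ k (hGdeg _)).2, hGcoeff]
        exact if_congr (dvd_mod_iff' g' _ L hg'L) rfl rfl
      rw [Finset.sum_congr rfl hterm, Finset.sum_ite, Finset.sum_const, Finset.sum_const_zero,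
        add_zero, nsmul_eq_mul]
    rw [hQcoeff]
    have hwT : w 0 * T = L := hT.symm
    obtain ⟨hdvdT, hcard⟩ := count_cong g' (w 0) L T r hg'pos (hw 0) hwT hg'L
    have hGG : Finset.univ.gcd w = Nat.gcd g' (w 0) := by
      rw [gcd_univ_head, Nat.gcd_comm, hg'def, hw'def]
    rw [hcard, hGG]
    set G0 := Nat.gcd g' (w 0) with hG0def
    have hG0pos : 0 < G0 := Nat.gcd_pos_of_pos_left _ hg'pos
    split_ifs with hr
    · -- main computation
      obtain ⟨p, hp⟩ : G0 ∣ g' := Nat.gcd_dvd_left _ _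
      have hpval : g' / G0 = p := by rw [hp, Nat.mul_div_cancel_left _ hG0pos]
      rw [hpval] at hdvdT
      obtain ⟨m, hm⟩ := hdvdT
      have hppos : 0 < p := by
        rcases Nat.eq_zero_or_pos p with h | h
        · exfalso; rw [h, mul_zero] at hp; omega
        · exact h
      have hTp : T / p = m := by rw [hm, Nat.mul_div_cancel_left _ hppos]
      rw [hpval, hTp]
      -- now pure real arithmetic
      have hLval : L = w 0 * (p * m) := by rw [hT, hm]
      have hprod : (∏ i : Fin (k + 2), (w i : ℝ)) = (w 0 : ℝ) * ∏ i : Fin (k + 1), (w' i : ℝ) := by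
        rw [Fin.prod_univ_succ]
        rfl
      have hfac : ((k + 1).factorial : ℝ) = (k + 1) * (k.factorial : ℝ) := by
        rw [Nat.factorial_succ]
        push_cast
        ring
      have hne1 : (k.factorial : ℝ) ≠ 0 := Nat.cast_ne_zero.mpr (Nat.factorial_ne_zero k)
      have hne2 : (∏ i : Fin (k + 1), (w' i : ℝ)) ≠ 0 := by
        apply Finset.prod_ne_zero_iff.mpr
        intro i _
        exact Nat.cast_ne_zero.mpr (hw' i).ne'
      have hne3 : ((w 0 : ℕ) : ℝ) ≠ 0 := Nat.cast_ne_zero.mpr (hw 0).ne'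
      have hne4 : ((k : ℝ) + 1) ≠ 0 := by positivity
      rw [hAdef, hprod, hfac]
      have hg'cast : (g' : ℝ) = (G0 : ℝ) * (p : ℝ) := by
        rw [hp]; push_cast; ring
      have hLcast : (L : ℝ) = (w 0 : ℝ) * ((p : ℝ) * (m : ℝ)) := by
        rw [hLval]; push_cast; ring
      rw [hg'cast]
      rw [show (L : ℝ) ^ (k + 1) = (L : ℝ) ^ k * (L : ℝ) by ring]
      rw [hLcast]
      field_simp
    · simp

theorem stmt_1 (n : ℕ) (w : Fin (n + 1) → ℕ) (hw : ∀ i, 0 < w i)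
    (hcop : Finset.univ.gcd w = 1) :
    ∃ c C : ℝ, ∀ M : ℕ, 1 ≤ M → Finset.univ.lcm w ∣ M →
      |(Nat.card {e : Fin (n + 1) → ℕ // ∑ i, w i * e i = M} : ℝ)
          - (1 / ∏ i, (w i : ℝ)) * (Nat.choose (M + n) n : ℝ)
          - c * (Nat.choose (M + n - 1) (n - 1) : ℝ)|
        ≤ C * (M : ℝ) ^ ((n : ℝ) - 2) := by
  obtain _ | m := n
  · -- n = 0 : gcd forces w 0 = 1
    refine ⟨0, 0, ?_⟩
    intro M hM _
    have hw0 : w 0 = 1 := by simpa using hcop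
    have hcard : (Nat.card {e : Fin (0 + 1) → ℕ // ∑ i, w i * e i = M} : ℝ) = 1 := by
      have : Nat.card {e : Fin (0 + 1) → ℕ // ∑ i, w i * e i = M} = bb w M := rfl
      rw [this, bb_one w M (hw 0), hw0, if_pos (one_dvd M)]
      norm_num
    rw [hcard]
    have hprod : (∏ i, (w i : ℝ)) = 1 := by
      rw [Fin.prod_univ_one, hw0]
      norm_num
    rw [hprod]
    norm_num
  · -- n = m + 1
    set L := Finset.univ.lcm w with hLdef
    have hL : 0 < L := by
      rcases Nat.eq_zero_or_pos L with h | h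
      · exfalso
        rw [hLdef, Finset.lcm_eq_zero_iff] at h
        obtain ⟨i, _, hi⟩ := h
        exact (hw i).ne' hi
      · exact h
    have hdvd : ∀ i, w i ∣ L := fun i => Finset.dvd_lcm (Finset.mem_univ i)
    obtain ⟨G, hGdeg, hGcoeff, hGeval⟩ := key (m + 1) w hw L hL hdvd 0
    rw [hcop, if_pos (one_dvd 0)] at hGcoeff
    have hprodpos : (0 : ℝ) < ∏ i, (w i : ℝ) :=
      Finset.prod_pos fun i _ => by exact_mod_cast hw i
    have hprodne : (∏ i, (w i : ℝ)) ≠ 0 := hprodpos.ne'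
    have hLne : ((L : ℕ) : ℝ) ≠ 0 := Nat.cast_ne_zero.mpr hL.ne'
    have hfacne : ∀ s : ℕ, ((s.factorial : ℕ) : ℝ) ≠ 0 :=
      fun s => Nat.cast_ne_zero.mpr (Nat.factorial_ne_zero s)
    set P1 : Polynomial ℝ :=
      (((m + 1).factorial : ℝ))⁻¹ • ∏ j ∈ range (m + 1), (C (L : ℝ) * X + C ((j : ℝ) + 1)) with hP1def
    set P2 : Polynomial ℝ :=
      ((m.factorial : ℝ))⁻¹ • ∏ j ∈ range m, (C (L : ℝ) * X + C ((j : ℝ) + 1)) with hP2def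
    obtain ⟨hpl1deg, hpl1coeff⟩ := prod_linear (L : ℝ) (fun j => (j : ℝ) + 1) (m + 1)
    obtain ⟨hpl2deg, hpl2coeff⟩ := prod_linear (L : ℝ) (fun j => (j : ℝ) + 1) m
    have hP1deg : P1.natDegree ≤ m + 1 :=
      le_trans (Polynomial.natDegree_smul_le _ _) hpl1deg
    have hP2deg : P2.natDegree ≤ m :=
      le_trans (Polynomial.natDegree_smul_le _ _) hpl2deg
    have hP1coeff : P1.coeff (m + 1) = (L : ℝ) ^ (m + 1) / ((m + 1).factorial : ℝ) := by
      rw [hP1def, Polynomial.coeff_smul, hpl1coeff, smul_eq_mul]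
      ring
    have hP2coeff : P2.coeff m = (L : ℝ) ^ m / (m.factorial : ℝ) := by
      rw [hP2def, Polynomial.coeff_smul, hpl2coeff, smul_eq_mul]
      ring
    have hP2top : P2.coeff (m + 1) = 0 :=
      Polynomial.coeff_eq_zero_of_natDegree_lt (lt_of_le_of_lt hP2deg (lt_add_one _))
    have hevalprod : ∀ (s t : ℕ),
        (∏ j ∈ range s, (C (L : ℝ) * X + C ((j : ℝ) + 1))).eval (t : ℝ)
          = ∏ j ∈ range s, (((L * t : ℕ) : ℝ) + (j : ℝ) + 1) := by
      intro s t
      rw [Polynomial.eval_prod]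
      apply Finset.prod_congr rfl
      intro j _
      simp only [Polynomial.eval_add, Polynomial.eval_mul, Polynomial.eval_C, Polynomial.eval_X]
      push_cast
      ring
    have hP1eval : ∀ t : ℕ, P1.eval (t : ℝ) = ((L * t + (m + 1)).choose (m + 1) : ℝ) := by
      intro t
      rw [choose_cast (L * t) (m + 1), hP1def, Polynomial.eval_smul, smul_eq_mul, hevalprod]
      ring
    have hP2eval : ∀ t : ℕ, P2.eval (t : ℝ) = ((L * t + m).choose m : ℝ) := by
      intro t
      rw [choose_cast (L * t) m, hP2def, Polynomial.eval_smul, smul_eq_mul, hevalprod]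
      ring
    set c : ℝ := (G.coeff m - (1 / ∏ i, (w i : ℝ)) * P1.coeff m) * (m.factorial : ℝ) / (L : ℝ) ^ m
      with hcdef
    set D : Polynomial ℝ := G - C (1 / ∏ i, (w i : ℝ)) * P1 - C c * P2 with hDdef
    have hDtop : D.coeff (m + 1) = 0 := by
      rw [hDdef, Polynomial.coeff_sub, Polynomial.coeff_sub, Polynomial.coeff_C_mul,
        Polynomial.coeff_C_mul, hGcoeff, hP1coeff, hP2top]
      push_cast
      field_simp
      ring
    have hDm : D.coeff m = 0 := by
      rw [hDdef, Polynomial.coeff_sub, Polynomial.coeff_sub, Polynomial.coeff_C_mul,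
        Polynomial.coeff_C_mul, hP2coeff, hcdef]
      have hLpow : ((L : ℝ)) ^ m ≠ 0 := pow_ne_zero _ hLne
      field_simp
      ring
    have hDdeg : D.natDegree ≤ m + 1 := by
      rw [hDdef]
      apply le_trans (Polynomial.natDegree_sub_le _ _)
      apply max_le
      · apply le_trans (Polynomial.natDegree_sub_le _ _)
        apply max_le hGdeg
        exact le_trans (Polynomial.natDegree_mul_le) (by simpa using hP1deg)
      · exact le_trans (Polynomial.natDegree_mul_le) (by simpa using (le_trans hP2deg (Nat.le_succ m)))
    have hDcoeffs : ∀ j, m - 1 < j → D.coeff j = 0 := by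
      intro j hj
      rcases Nat.lt_or_ge j (m + 2) with h | h
      · rcases Nat.lt_or_ge j (m + 1) with h2 | h2
        · have : j = m := by omega
          rw [this]; exact hDm
        · have : j = m + 1 := by omega
          rw [this]; exact hDtop
      · exact Polynomial.coeff_eq_zero_of_natDegree_lt (by omega)
    set CC : ℝ := ∑ j ∈ range (m - 1 + 1), |D.coeff j| with hCCdef
    have hCC0 : 0 ≤ CC := Finset.sum_nonneg fun j _ => abs_nonneg _
    refine ⟨c, CC, ?_⟩
    intro M hM hLdvd
    obtain ⟨t, hMt⟩ := hLdvd
    have ht : 1 ≤ t := by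
      rcases Nat.eq_zero_or_pos t with h | h
      · exfalso
        rw [h, mul_zero] at hMt
        exact (Nat.one_le_iff_ne_zero.mp hM) hMt
      · exact h
    have hcard : (Nat.card {e : Fin (m + 1 + 1) → ℕ // ∑ i, w i * e i = M} : ℝ)
        = G.eval (t : ℝ) := by
      have h1 : Nat.card {e : Fin (m + 1 + 1) → ℕ // ∑ i, w i * e i = M} = bb w M := rfl
      have h2 : bb w M = bb w (L * t + 0) := by
        have h3 : L * t + 0 = M := by rw [Nat.add_zero]; exact hMt.symm
        rw [h3]
      rw [h1, h2]
      exact hGeval t ht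
    have hch1 : ((M + (m + 1)).choose (m + 1) : ℝ) = P1.eval (t : ℝ) := by
      rw [hP1eval t, hMt]
    have hch2 : ((M + (m + 1) - 1).choose (m + 1 - 1) : ℝ) = P2.eval (t : ℝ) := by
      have h4 : M + (m + 1) - 1 = L * t + m := by
        rw [hMt, Nat.add_succ, Nat.succ_sub_one]
      have h5 : m + 1 - 1 = m := Nat.succ_sub_one m
      rw [hP2eval t, h4, h5]
    rw [hcard, hch1, hch2]
    have hDeval : G.eval (t : ℝ) - (1 / ∏ i, (w i : ℝ)) * P1.eval (t : ℝ) - c * P2.eval (t : ℝ)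
        = D.eval (t : ℝ) := by
      rw [hDdef]
      simp [Polynomial.eval_sub, Polynomial.eval_mul, Polynomial.eval_C]
    rw [hDeval]
    have hbound := eval_bound D (m - 1) hDcoeffs (t : ℝ) (by exact_mod_cast ht)
    rw [← hCCdef] at hbound
    rcases Nat.eq_zero_or_pos m with hm0 | hm1
    · -- m = 0 : CC = 0 and everything vanishes
      have hCCz : CC = 0 := by
        rw [hCCdef, hm0]
        simp only [Nat.zero_sub, zero_add, Finset.sum_range_one]
        rw [show D.coeff 0 = 0 from hm0 ▸ hDm]
        simp
      rw [hCCz, zero_mul] at hbound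
      rw [hCCz, zero_mul]
      exact hbound
    · -- m ≥ 1
      have hexp : ((m + 1 : ℕ) : ℝ) - 2 = ((m - 1 : ℕ) : ℝ) := by
        push_cast [Nat.cast_sub hm1]
        ring
      have hrpow : (M : ℝ) ^ (((m + 1 : ℕ) : ℝ) - 2) = (M : ℝ) ^ (m - 1 : ℕ) := by
        rw [hexp, Real.rpow_natCast]
      have htM : (t : ℝ) ≤ (M : ℝ) := by
        have : t ≤ M := by
          rw [hMt]
          exact Nat.le_mul_of_pos_left t hL
        exact_mod_cast this
      have hpow : ((t : ℝ)) ^ (m - 1 : ℕ) ≤ ((M : ℝ)) ^ (m - 1 : ℕ) :=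
        pow_le_pow_left₀ (by positivity) htM _
      calc |D.eval (t : ℝ)| ≤ CC * (t : ℝ) ^ (m - 1 : ℕ) := hbound
        _ ≤ CC * (M : ℝ) ^ (m - 1 : ℕ) := by
            apply mul_le_mul_of_nonneg_left hpow hCC0
        _ = CC * (M : ℝ) ^ (((m + 1 : ℕ) : ℝ) - 2) := by rw [hrpow]
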